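/- Feasibility criterion: the constraint set { w Lipschitz on [0,s_f] : μ⁻ ≤ w ≤ μ⁺, α⁻ ≤ w' ≤ α⁺ a.e. } is nonempty if and only if M̄(μ⁺) ≥ μ⁻ pointwise. -/

import Mathlib

open MeasureTheory Set intervalIntegral Filter Topology Metric

/-- `A(y,x) = ∫_y^x α⁺` if `y ≤ x`, and `∫_x^y (−α⁻)` if `y > x`. -/
noncomputable def A2 (αp αm : ℝ → ℝ) (y x : ℝ) : ℝ :=
  if y ≤ x then ∫ t in y..x, αp t else ∫ t in x..y, (-αm t)

/-- The meet operator `M̄(w)(x) = inf_{y ∈ [0,s_f]} { w(y) + A(y,x) }`. -/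
noncomputable def Mbar (sf : ℝ) (αp αm : ℝ → ℝ) (w : ℝ → ℝ) : ℝ → ℝ :=
  fun x => sInf {z : ℝ | ∃ y ∈ Icc (0:ℝ) sf, z = w y + A2 αp αm y x}


lemma lip_deriv_bound {K : NNReal} {g : ℝ → ℝ} (hg : LipschitzWith K g) (t : ℝ) :
    |deriv g t| ≤ K := by
  by_cases h : DifferentiableAt ℝ g t
  · have hd := h.hasDerivAt
    rw [hasDerivAt_iff_tendsto_slope] at hd
    have h1 : Tendsto (fun y => |slope g t y|) (𝓝[≠] t) (𝓝 |deriv g t|) :=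
      (continuous_abs.tendsto _).comp hd
    refine le_of_tendsto h1 ?_
    filter_upwards [self_mem_nhdsWithin] with y hy
    have hyt : y ≠ t := hy
    have h2 : dist (g y) (g t) ≤ K * dist y t := hg.dist_le_mul y t
    rw [slope_def_field, abs_div]
    rw [div_le_iff₀ (by simpa [abs_sub_comm] using abs_pos.2 (sub_ne_zero.2 hyt))]
    calc |g y - g t| = dist (g y) (g t) := (Real.dist_eq _ _).symm
      _ ≤ K * dist y t := h2
      _ = K * |y - t| := by rw [Real.dist_eq]
  · simp [deriv_zero_of_not_differentiableAt h]

lemma deriv_integrableOn {K : NNReal} {g : ℝ → ℝ} (hg : LipschitzWith K g) {s : Set ℝ}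
    (hs : MeasurableSet s) (hfin : volume s < ⊤) :
    IntegrableOn (deriv g) s volume := by
  refine Integrable.mono' (g := fun _ => (K : ℝ)) ?_ ((measurable_deriv g).aestronglyMeasurable.restrict) ?_
  · exact integrableOn_const hfin.ne
  · filter_upwards with t
    simpa [Real.norm_eq_abs] using lip_deriv_bound hg t


lemma lipschitz_ftc {K : NNReal} {g : ℝ → ℝ} (hg : LipschitzWith K g) {a b : ℝ} (hab : a ≤ b) :
    g b - g a = ∫ t in a..b, deriv g t := by
  have hgc : Continuous g := hg.continuous
  have hgi : ∀ c d : ℝ, IntervalIntegrable g volume c d := fun c d =>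
    hgc.intervalIntegrable c d
  set h : ℕ → ℝ := fun n => 1 / (n + 1) with hh
  have hhpos : ∀ n, 0 < h n := fun n => by positivity
  have hcont : ∀ n : ℕ, Continuous fun t => (g (t + h n) - g t) * ((n : ℝ) + 1) := by
    intro n
    exact ((hgc.comp (continuous_add_right (h n))).sub hgc).mul continuous_const
  set F : ℕ → ℝ → ℝ := fun n t => (g (t + h n) - g t) * ((n : ℝ) + 1) with hF
  have e3 : ∀ n : ℕ, ((n : ℝ) + 1) * h n = 1 := by
    intro n; rw [hh]; field_simp
  -- identity (i)
  have key : ∀ n, (∫ t in a..b, F n t) =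
      ((∫ t in b..(b + h n), g t) - ∫ t in a..(a + h n), g t) * ((n : ℝ) + 1) := by
    intro n
    have h1 : (∫ t in a..b, g (t + h n)) = ∫ t in (a + h n)..(b + h n), g t :=
      integral_comp_add_right g (h n)
    have h2 : (∫ t in a..b, F n t) =
        ((∫ t in a..b, g (t + h n)) - ∫ t in a..b, g t) * ((n : ℝ) + 1) := by
      have hgi' : IntervalIntegrable (fun t => g (t + h n)) volume a b := by
        apply Continuous.intervalIntegrable; continuity
      rw [hF]
      rw [intervalIntegral.integral_mul_const]
      rw [intervalIntegral.integral_sub hgi' (hgi a b)]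
    have h3 : (∫ t in a + h n..b, g t) + (∫ t in b..(b + h n), g t) = ∫ t in (a + h n)..(b + h n), g t :=
      integral_add_adjacent_intervals (hgi _ _) (hgi _ _)
    have h4 : (∫ t in a..(a + h n), g t) + (∫ t in (a + h n)..b, g t) = ∫ t in a..b, g t :=
      integral_add_adjacent_intervals (hgi _ _) (hgi _ _)
    rw [h2, h1, ← h3, ← h4]; ring
  -- limit (ii)
  have lim_pt : ∀ c : ℝ, Tendsto (fun n => (∫ t in c..(c + h n), g t) * ((n : ℝ) + 1)) atTop (𝓝 (g c)) := by
    intro c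
    have hbound : ∀ n : ℕ, |(∫ t in c..(c + h n), g t) * ((n : ℝ) + 1) - g c| ≤ K * h n := by
      intro n
      have e1 : (∫ t in c..(c + h n), g t) - h n * g c = ∫ t in c..(c + h n), (g t - g c) := by
        rw [intervalIntegral.integral_sub (hgi _ _) (intervalIntegrable_const)]
        simp
      have e2 : |∫ t in c..(c + h n), (g t - g c)| ≤ (K * h n) * |(c + h n) - c| := by
        rw [← Real.norm_eq_abs]
        apply intervalIntegral.norm_integral_le_of_norm_le_const
        intro x hx
        rw [Set.uIoc_of_le (by linarith [hhpos n])] at hx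
        have hb : |g x - g c| ≤ K * |x - c| := by
          calc |g x - g c| = dist (g x) (g c) := (Real.dist_eq _ _).symm
            _ ≤ K * dist x c := hg.dist_le_mul x c
            _ = K * |x - c| := by rw [Real.dist_eq]
        refine hb.trans ?_
        have hxc : |x - c| ≤ h n := by
          rw [abs_le]; constructor <;> [linarith [hx.1, hhpos n]; linarith [hx.2]]
        exact mul_le_mul_of_nonneg_left hxc (by positivity)
      have e4 : (∫ t in c..(c + h n), g t) * ((n : ℝ) + 1) - g c
          = ((∫ t in c..(c + h n), g t) - h n * g c) * ((n : ℝ) + 1) := by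
        rw [sub_mul, mul_comm (h n) (g c), mul_assoc, mul_comm (h n), e3, mul_one]
      calc |(∫ t in c..(c + h n), g t) * ((n : ℝ) + 1) - g c|
          = |(∫ t in c..(c + h n), g t) - h n * g c| * ((n : ℝ) + 1) := by
            rw [e4, abs_mul, abs_of_nonneg (by positivity : (0:ℝ) ≤ (n:ℝ) + 1)]
        _ ≤ ((K * h n) * |(c + h n) - c|) * ((n : ℝ) + 1) := by
            apply mul_le_mul_of_nonneg_right _ (by positivity)
            rw [e1]; exact e2
        _ = K * h n := by
            rw [show (c + h n) - c = h n by ring, abs_of_pos (hhpos n)]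
            rw [mul_assoc, mul_assoc, show h n * ((n:ℝ)+1) = 1 from by rw [mul_comm]; exact e3 n]
            ring
    have hK : Tendsto (fun n : ℕ => (K : ℝ) * h n) atTop (𝓝 0) := by
      have h0 := tendsto_one_div_add_atTop_nhds_zero_nat (𝕜 := ℝ)
      simpa [hh] using h0.const_mul (K : ℝ)
    rw [← tendsto_sub_nhds_zero_iff]
    apply squeeze_zero_norm _ hK
    intro n
    simpa [Real.norm_eq_abs] using hbound n
  -- a.e. pointwise convergence (iii)
  have hae : ∀ᵐ t : ℝ, Tendsto (fun n => F n t) atTop (𝓝 (deriv g t)) := by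
    filter_upwards [hg.ae_differentiableAt_of_real] with t ht
    have hd := ht.hasDerivAt
    rw [hasDerivAt_iff_tendsto_slope] at hd
    have hseq : Tendsto (fun n : ℕ => t + h n) atTop (𝓝[≠] t) := by
      rw [tendsto_nhdsWithin_iff]
      constructor
      · have h0 := tendsto_one_div_add_atTop_nhds_zero_nat (𝕜 := ℝ)
        have := (tendsto_const_nhds (x := t) (f := atTop (α := ℕ))).add h0
        simpa [hh] using this
      · filter_upwards with n
        simp only [mem_compl_iff, mem_singleton_iff]
        have := hhpos n; intro hcontra; nlinarith [hcontra]
    have := hd.comp hseq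
    apply this.congr
    intro n
    have hinv : (h n)⁻¹ = (n:ℝ)+1 := by rw [hh]; simp
    simp only [Function.comp_apply, slope_def_field, hF]
    rw [add_sub_cancel_left, div_eq_mul_inv, hinv]
  -- dominated convergence
  have hdom : Tendsto (fun n => ∫ t in Ioc a b, F n t) atTop (𝓝 (∫ t in Ioc a b, deriv g t)) := by
    apply tendsto_integral_of_dominated_convergence (fun _ => (K : ℝ))
    · exact fun n => ((hcont n).aestronglyMeasurable).restrict
    · exact integrableOn_const (by simp [Real.volume_Ioc])
    · intro n
      filter_upwards with t
      have hb : |g (t + h n) - g t| ≤ K * h n := by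
        calc |g (t + h n) - g t| = dist (g (t + h n)) (g t) := (Real.dist_eq _ _).symm
          _ ≤ K * dist (t + h n) t := hg.dist_le_mul _ _
          _ = K * h n := by rw [Real.dist_eq, add_sub_cancel_left, abs_of_pos (hhpos n)]
      have : ‖F n t‖ = |g (t + h n) - g t| * ((n:ℝ)+1) := by
        rw [Real.norm_eq_abs, hF, abs_mul, abs_of_nonneg (by positivity : (0:ℝ) ≤ (n:ℝ)+1)]
      rw [this]
      calc |g (t + h n) - g t| * ((n:ℝ)+1) ≤ (K * h n) * ((n:ℝ)+1) :=
            mul_le_mul_of_nonneg_right hb (by positivity)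
        _ = K := by rw [mul_assoc, show h n * ((n:ℝ)+1) = 1 from by rw [mul_comm]; exact e3 n, mul_one]
    · exact ae_restrict_of_ae hae
  -- assemble
  have hconv : Tendsto (fun n => ∫ t in a..b, F n t) atTop (𝓝 (g b - g a)) := by
    have h5 := (lim_pt b).sub (lim_pt a)
    refine h5.congr fun n => ?_
    rw [key n]; ring
  have heq : ∀ n, (∫ t in a..b, F n t) = ∫ t in Ioc a b, F n t := fun n =>
    intervalIntegral.integral_of_le hab
  rw [intervalIntegral.integral_of_le hab]
  exact tendsto_nhds_unique (hconv.congr heq) hdom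

lemma ae_tendsto_avg {sf : ℝ} (hsf : 0 < sf) {f : ℝ → ℝ}
    (hf : IntervalIntegrable f volume 0 sf) :
    ∀ᵐ s : ℝ, s ∈ Ioo 0 sf →
      Tendsto (fun h => (∫ t in s..(s+h), f t) / h) (𝓝[>] (0:ℝ)) (𝓝 (f s)) := by
  set f' : ℝ → ℝ := indicator (Icc 0 sf) f with hf'
  have hI : IntegrableOn f (Icc 0 sf) volume := by
    rw [integrableOn_Icc_iff_integrableOn_Ioc]
    exact hf.1
  have hint : Integrable f' volume := hI.integrable_indicator measurableSet_Icc
  have hloc : LocallyIntegrable f' volume := hint.locallyIntegrable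
  filter_upwards [IsUnifLocDoublingMeasure.ae_tendsto_average (μ := volume) hloc 1] with s hs hmem
  have h1 : Tendsto (fun h : ℝ => h / 2) (𝓝[>] (0:ℝ)) (𝓝[>] (0:ℝ)) := by
    rw [tendsto_nhdsWithin_iff]
    constructor
    · exact ((continuous_id.div_const 2).tendsto' 0 0 (by norm_num)).mono_left nhdsWithin_le_nhds
    · filter_upwards [self_mem_nhdsWithin] with h hh
      exact mem_Ioi.2 (by linarith [mem_Ioi.1 hh])
  have h2 : ∀ᶠ h : ℝ in 𝓝[>] (0:ℝ), s ∈ closedBall (s + h / 2) (1 * (h / 2)) := by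
    filter_upwards [self_mem_nhdsWithin] with h hh
    have h0 : 0 < h := mem_Ioi.1 hh
    rw [mem_closedBall, Real.dist_eq]
    rw [abs_of_nonpos (by linarith)]
    linarith
  have h3 := hs (fun h : ℝ => s + h / 2) (fun h : ℝ => h / 2) h1 h2
  have hfs : f' s = f s := indicator_of_mem (Ioo_subset_Icc_self hmem) f
  rw [hfs] at h3
  refine h3.congr' ?_
  have hIoo : Ioo (0:ℝ) (sf - s) ∈ 𝓝[>] (0:ℝ) :=
    Ioo_mem_nhdsGT_of_mem ⟨le_refl _, by linarith [hmem.2]⟩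
  filter_upwards [hIoo] with h hh
  obtain ⟨h0, hlt⟩ := hh
  have hsub : Icc s (s + h) ⊆ Icc 0 sf := by
    apply Icc_subset_Icc (le_of_lt hmem.1)
    linarith
  have hball : closedBall (s + h / 2) (h / 2) = Icc s (s + h) := by
    rw [Real.closedBall_eq_Icc]; congr 1 <;> ring
  rw [setAverage_eq, hball]
  have hieq : ∫ y in Icc s (s + h), f' y = ∫ y in Icc s (s + h), f y := by
    apply setIntegral_congr_fun measurableSet_Icc
    intro y hy
    exact indicator_of_mem (hsub hy) f
  rw [hieq]
  have hv : (volume (Icc s (s + h))).toReal = h := by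
    rw [Real.volume_Icc]
    simp [ENNReal.toReal_ofReal h0.le]
  rw [measureReal_def, hv, MeasureTheory.integral_Icc_eq_integral_Ioc,
    ← intervalIntegral.integral_of_le (by linarith : s ≤ s + h)]
  rw [smul_eq_mul, div_eq_mul_inv, mul_comm]

/-- From a.e. derivative bounds to increment bounds (uses Lipschitz FTC). -/
lemma P_of_deriv {sf : ℝ} (hsf : 0 < sf) {αp αm w : ℝ → ℝ} {K : NNReal}
    (hip : IntervalIntegrable αp volume 0 sf)
    (him : IntervalIntegrable αm volume 0 sf)
    (hw : LipschitzOnWith K w (Icc (0:ℝ) sf))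
    (hd : ∀ᵐ s ∂volume, s ∈ Icc (0:ℝ) sf →
        αm s ≤ derivWithin w (Icc (0:ℝ) sf) s ∧ derivWithin w (Icc (0:ℝ) sf) s ≤ αp s) :
    ∀ x ∈ Icc (0:ℝ) sf, ∀ x' ∈ Icc (0:ℝ) sf, x ≤ x' →
      (∫ t in x..x', αm t) ≤ w x' - w x ∧ w x' - w x ≤ ∫ t in x..x', αp t := by
  obtain ⟨g, hgl, hfg⟩ := hw.extend_real
  have hae : ∀ᵐ t : ℝ, t ∈ Ioo (0:ℝ) sf → αm t ≤ deriv g t ∧ deriv g t ≤ αp t := by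
    filter_upwards [hd, hgl.ae_differentiableAt_of_real] with t ht hdg htIoo
    have hI : Icc (0:ℝ) sf ∈ 𝓝 t := Icc_mem_nhds htIoo.1 htIoo.2
    have htIcc : t ∈ Icc (0:ℝ) sf := Ioo_subset_Icc_self htIoo
    have heq : derivWithin w (Icc (0:ℝ) sf) t = deriv g t := by
      rw [derivWithin_congr hfg (hfg htIcc), derivWithin_of_mem_nhds hI]
    rw [heq] at ht
    exact ht htIcc
  intro x hx x' hx' hxx'
  have hsub : Ioo x x' ⊆ Ioo (0:ℝ) sf := fun t ht =>
    ⟨lt_of_le_of_lt hx.1 ht.1, lt_of_lt_of_le ht.2 hx'.2⟩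
  have hftc : g x' - g x = ∫ t in Ioo x x', deriv g t := by
    rw [lipschitz_ftc hgl hxx', intervalIntegral.integral_of_le hxx',
      MeasureTheory.integral_Ioc_eq_integral_Ioo]
  have hwg : w x' - w x = g x' - g x := by rw [hfg hx, hfg hx']
  have hder_int : IntegrableOn (deriv g) (Ioo x x') volume :=
    deriv_integrableOn hgl measurableSet_Ioo (by simp [Real.volume_Ioo])
  have hmem_uIcc : ∀ c ∈ Icc (0:ℝ) sf, c ∈ uIcc (0:ℝ) sf := by
    intro c hc; rw [uIcc_of_le hsf.le]; exact hc
  have hαp_int : IntegrableOn αp (Ioo x x') volume :=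
    ((hip.mono_set (uIcc_subset_uIcc (hmem_uIcc x hx) (hmem_uIcc x' hx'))).1).mono_set
      Ioo_subset_Ioc_self
  have hαm_int : IntegrableOn αm (Ioo x x') volume :=
    ((him.mono_set (uIcc_subset_uIcc (hmem_uIcc x hx) (hmem_uIcc x' hx'))).1).mono_set
      Ioo_subset_Ioc_self
  have haep : ∀ᵐ t ∂volume.restrict (Ioo x x'), deriv g t ≤ αp t := by
    rw [ae_restrict_iff' measurableSet_Ioo]
    filter_upwards [hae] with t ht htm
    exact (ht (hsub htm)).2
  have haem : ∀ᵐ t ∂volume.restrict (Ioo x x'), αm t ≤ deriv g t := by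
    rw [ae_restrict_iff' measurableSet_Ioo]
    filter_upwards [hae] with t ht htm
    exact (ht (hsub htm)).1
  constructor
  · rw [hwg, hftc, intervalIntegral.integral_of_le hxx',
      MeasureTheory.integral_Ioc_eq_integral_Ioo]
    exact setIntegral_mono_ae_restrict hαm_int hder_int haem
  · rw [hwg, hftc, intervalIntegral.integral_of_le hxx',
      MeasureTheory.integral_Ioc_eq_integral_Ioo]
    exact setIntegral_mono_ae_restrict hder_int hαp_int haep

/-- From increment bounds to a.e. derivative bounds (uses Rademacher + Lebesgue). -/
lemma deriv_of_P {sf : ℝ} (hsf : 0 < sf) {αp αm w : ℝ → ℝ} {K : NNReal}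
    (hip : IntervalIntegrable αp volume 0 sf)
    (him : IntervalIntegrable αm volume 0 sf)
    (hw : LipschitzOnWith K w (Icc (0:ℝ) sf))
    (hP : ∀ x ∈ Icc (0:ℝ) sf, ∀ x' ∈ Icc (0:ℝ) sf, x ≤ x' →
      (∫ t in x..x', αm t) ≤ w x' - w x ∧ w x' - w x ≤ ∫ t in x..x', αp t) :
    ∀ᵐ s ∂volume, s ∈ Icc (0:ℝ) sf →
        αm s ≤ derivWithin w (Icc (0:ℝ) sf) s ∧ derivWithin w (Icc (0:ℝ) sf) s ≤ αp s := by
  have hbd : ∀ᵐ s : ℝ, s ∉ ({0, sf} : Set ℝ) := by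
    refine compl_mem_ae_iff.2 ?_
    rw [show ({0, sf} : Set ℝ) = {0} ∪ {sf} from Set.insert_eq 0 {sf}]
    exact measure_union_null Real.volume_singleton Real.volume_singleton
  filter_upwards [hw.ae_differentiableWithinAt_of_mem_of_real, ae_tendsto_avg hsf hip,
    ae_tendsto_avg hsf him, hbd] with s hdiff htp htm hne hmemIcc
  have hsIoo : s ∈ Ioo (0:ℝ) sf := by
    simp only [mem_insert_iff, mem_singleton_iff, not_or] at hne
    exact ⟨lt_of_le_of_ne hmemIcc.1 (Ne.symm hne.1), lt_of_le_of_ne hmemIcc.2 hne.2⟩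
  set d := derivWithin w (Icc (0:ℝ) sf) s with hdd
  have hd : HasDerivWithinAt w d (Icc (0:ℝ) sf) s := (hdiff hmemIcc).hasDerivWithinAt
  have hd' : HasDerivWithinAt w d (Ioc s sf) s :=
    hd.mono fun y hy => ⟨le_trans hmemIcc.1 hy.1.le, hy.2⟩
  have hslope : Tendsto (slope w s) (𝓝[>] s) (𝓝 d) := by
    rw [hasDerivWithinAt_iff_tendsto_slope] at hd'
    have : Ioc s sf \ {s} = Ioc s sf := by
      apply diff_singleton_eq_self; simp
    rw [this, nhdsWithin_Ioc_eq_nhdsGT hsIoo.2] at hd'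
    exact hd'
  have hmap : Tendsto (fun y : ℝ => y - s) (𝓝[>] s) (𝓝[>] (0:ℝ)) := by
    rw [tendsto_nhdsWithin_iff]
    constructor
    · exact ((continuous_id.sub continuous_const).tendsto' s 0 (by simp)).mono_left
        nhdsWithin_le_nhds
    · filter_upwards [self_mem_nhdsWithin] with y hy
      exact mem_Ioi.2 (by linarith [mem_Ioi.1 hy])
  have hGp : Tendsto (fun y => (∫ t in s..y, αp t) / (y - s)) (𝓝[>] s) (𝓝 (αp s)) := by
    have := (htp hsIoo).comp hmap
    refine this.congr fun y => ?_
    simp only [Function.comp_apply]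
    rw [add_sub_cancel]
  have hGm : Tendsto (fun y => (∫ t in s..y, αm t) / (y - s)) (𝓝[>] s) (𝓝 (αm s)) := by
    have := (htm hsIoo).comp hmap
    refine this.congr fun y => ?_
    simp only [Function.comp_apply]
    rw [add_sub_cancel]
  have hev : Ioc s sf ∈ 𝓝[>] s := Ioc_mem_nhdsGT_of_mem ⟨le_refl _, hsIoo.2⟩
  constructor
  · refine le_of_tendsto_of_tendsto hGm hslope ?_
    filter_upwards [hev] with y hy
    have hys : s < y := hy.1
    have hyI : y ∈ Icc (0:ℝ) sf := ⟨le_trans hmemIcc.1 hys.le, hy.2⟩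
    have h5 := (hP s hmemIcc y hyI hys.le).1
    have hse : slope w s y = (w y - w s) / (y - s) := slope_def_field w s y
    rw [hse]
    have hpos : 0 < y - s := by linarith
    gcongr
  · refine le_of_tendsto_of_tendsto hslope hGp ?_
    filter_upwards [hev] with y hy
    have hys : s < y := hy.1
    have hyI : y ∈ Icc (0:ℝ) sf := ⟨le_trans hmemIcc.1 hys.le, hy.2⟩
    have h5 := (hP s hmemIcc y hyI hys.le).2
    have hse : slope w s y = (w y - w s) / (y - s) := slope_def_field w s y
    rw [hse]
    have hpos : 0 < y - s := by linarith
    gcongr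

/-- Feasibility criterion: the constraint set
`{ w Lipschitz : μ⁻ ≤ w ≤ μ⁺, α⁻ ≤ w' ≤ α⁺ a.e. }` is nonempty iff
`M̄(μ⁺) ≥ μ⁻` pointwise. -/
theorem stmt_17 (sf Ca : ℝ) (hsf : 0 < sf) (αp αm μm μp : ℝ → ℝ) (Kμ : NNReal)
    (hip : IntervalIntegrable αp volume 0 sf)
    (him : IntervalIntegrable αm volume 0 sf)
    (hp : ∀ s ∈ Icc (0:ℝ) sf, 0 ≤ αp s)
    (hm : ∀ s ∈ Icc (0:ℝ) sf, αm s ≤ 0)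
    (hCa : ∀ s ∈ Icc (0:ℝ) sf, |αp s| ≤ Ca ∧ |αm s| ≤ Ca)
    (hμm0 : ∀ s ∈ Icc (0:ℝ) sf, 0 ≤ μm s)
    (hμp : LipschitzOnWith Kμ μp (Icc (0:ℝ) sf)) :
    (∃ (w : ℝ → ℝ) (K : NNReal), LipschitzOnWith K w (Icc (0:ℝ) sf) ∧
      (∀ s ∈ Icc (0:ℝ) sf, μm s ≤ w s ∧ w s ≤ μp s) ∧
      (∀ᵐ s ∂volume, s ∈ Icc (0:ℝ) sf →
        αm s ≤ derivWithin w (Icc (0:ℝ) sf) s ∧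
        derivWithin w (Icc (0:ℝ) sf) s ≤ αp s))
    ↔ (∀ s ∈ Icc (0:ℝ) sf, μm s ≤ Mbar sf αp αm μp s) := by
  set I := Icc (0:ℝ) sf with hI
  -- Interval integrability on subintervals
  have hmem_uIcc : ∀ c ∈ I, c ∈ uIcc (0:ℝ) sf := by
    intro c hc; rw [uIcc_of_le hsf.le]; exact hc
  have hsub_int : ∀ (f : ℝ → ℝ), IntervalIntegrable f volume 0 sf →
      ∀ x ∈ I, ∀ y ∈ I, IntervalIntegrable f volume x y := fun f hf x hx y hy =>
    hf.mono_set (uIcc_subset_uIcc (hmem_uIcc x hx) (hmem_uIcc y hy))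
  -- nonnegativity of integrals of αp and -αm over subintervals
  have hip_nonneg : ∀ x ∈ I, ∀ y ∈ I, x ≤ y → 0 ≤ ∫ t in x..y, αp t := by
    intro x hx y hy hxy
    apply intervalIntegral.integral_nonneg hxy
    intro t ht
    exact hp t ⟨le_trans hx.1 ht.1, le_trans ht.2 hy.2⟩
  have him_nonneg : ∀ x ∈ I, ∀ y ∈ I, x ≤ y → 0 ≤ ∫ t in x..y, (-αm t) := by
    intro x hx y hy hxy
    apply intervalIntegral.integral_nonneg hxy
    intro t ht
    exact neg_nonneg.2 (hm t ⟨le_trans hx.1 ht.1, le_trans ht.2 hy.2⟩)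
  have hA2_nonneg : ∀ y ∈ I, ∀ x ∈ I, 0 ≤ A2 αp αm y x := by
    intro y hy x hx
    rw [A2]
    split_ifs with h
    · exact hip_nonneg y hy x hx h
    · exact him_nonneg x hx y hy (le_of_not_ge h)
  -- the sets S x
  have hSne : ∀ x ∈ I, {z : ℝ | ∃ y ∈ I, z = μp y + A2 αp αm y x}.Nonempty := by
    intro x hx
    exact ⟨μp x + A2 αp αm x x, x, hx, rfl⟩
  have h0I : (0:ℝ) ∈ I := ⟨le_refl _, hsf.le⟩
  have hSbdd : ∀ x ∈ I, BddBelow {z : ℝ | ∃ y ∈ I, z = μp y + A2 αp αm y x} := by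
    intro x hx
    refine ⟨μp 0 - Kμ * sf, ?_⟩
    rintro z ⟨y, hy, rfl⟩
    have h1 : dist (μp y) (μp 0) ≤ Kμ * dist y 0 := hμp.dist_le_mul y hy 0 h0I
    have h2 : |μp y - μp 0| ≤ Kμ * |y| := by
      simpa [Real.dist_eq] using h1
    have h3 : Kμ * |y| ≤ Kμ * sf := by
      apply mul_le_mul_of_nonneg_left _ (NNReal.coe_nonneg Kμ)
      rw [abs_of_nonneg hy.1]; exact hy.2
    have h4 := hA2_nonneg y hy x hx
    have := (abs_le.1 h2).1
    linarith
  have hA2_self : ∀ x : ℝ, A2 αp αm x x = 0 := by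
    intro x; rw [A2, if_pos (le_refl x), intervalIntegral.integral_same]
  -- P(w) holds for w = Mbar sf αp αm μp
  have hCa0 : 0 ≤ Ca := le_trans (abs_nonneg _) (hCa 0 h0I).1
  -- Claim 1 and Claim 2
  have claim1 : ∀ x ∈ I, ∀ x' ∈ I, x ≤ x' → ∀ y ∈ I,
      A2 αp αm y x' ≤ A2 αp αm y x + ∫ t in x..x', αp t := by
    intro x hx x' hx' hxx' y hy
    rcases le_or_gt y x with h1 | h1
    · rw [A2, if_pos (le_trans h1 hxx'), A2, if_pos h1,
        ← intervalIntegral.integral_add_adjacent_intervals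
          (hsub_int αp hip y hy x hx) (hsub_int αp hip x hx x' hx')]
    · rcases le_or_gt y x' with h2 | h2
      · rw [A2, if_pos h2, A2, if_neg (not_le.2 h1)]
        have e1 : (∫ t in x..x', αp t) = (∫ t in x..y, αp t) + ∫ t in y..x', αp t :=
          (intervalIntegral.integral_add_adjacent_intervals
            (hsub_int αp hip x hx y hy) (hsub_int αp hip y hy x' hx')).symm
        have e2 : 0 ≤ ∫ t in x..y, αp t := hip_nonneg x hx y hy h1.le
        have e3 : 0 ≤ ∫ t in x..y, (-αm t) := him_nonneg x hx y hy h1.le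
        linarith [e1, e2, e3]
      · rw [A2, if_neg (not_le.2 h2), A2, if_neg (not_le.2 (lt_of_le_of_lt hxx' h2))]
        have e1 : (∫ t in x..y, (-αm t)) = (∫ t in x..x', (-αm t)) + ∫ t in x'..y, (-αm t) :=
          (intervalIntegral.integral_add_adjacent_intervals
            ((hsub_int αm him x hx x' hx').neg) ((hsub_int αm him x' hx' y hy).neg)).symm
        have e2 : 0 ≤ ∫ t in x..x', (-αm t) := him_nonneg x hx x' hx' hxx'
        have e3 : 0 ≤ ∫ t in x..x', αp t := hip_nonneg x hx x' hx' hxx'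
        linarith [e1, e2, e3]
  have claim2 : ∀ x ∈ I, ∀ x' ∈ I, x ≤ x' → ∀ y ∈ I,
      A2 αp αm y x ≤ A2 αp αm y x' + ∫ t in x..x', (-αm t) := by
    intro x hx x' hx' hxx' y hy
    rcases le_or_gt y x with h1 | h1
    · rw [A2, if_pos h1, A2, if_pos (le_trans h1 hxx')]
      have e1 : (∫ t in y..x', αp t) = (∫ t in y..x, αp t) + ∫ t in x..x', αp t :=
        (intervalIntegral.integral_add_adjacent_intervals
          (hsub_int αp hip y hy x hx) (hsub_int αp hip x hx x' hx')).symm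
      have e2 : 0 ≤ ∫ t in x..x', αp t := hip_nonneg x hx x' hx' hxx'
      have e3 : 0 ≤ ∫ t in x..x', (-αm t) := him_nonneg x hx x' hx' hxx'
      linarith [e1, e2, e3]
    · rcases le_or_gt y x' with h2 | h2
      · rw [A2, if_neg (not_le.2 h1), A2, if_pos h2]
        have e1 : (∫ t in x..x', (-αm t)) = (∫ t in x..y, (-αm t)) + ∫ t in y..x', (-αm t) :=
          (intervalIntegral.integral_add_adjacent_intervals
            ((hsub_int αm him x hx y hy).neg) ((hsub_int αm him y hy x' hx').neg)).symm
        have e2 : 0 ≤ ∫ t in y..x', (-αm t) := him_nonneg y hy x' hx' h2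
        have e3 : 0 ≤ ∫ t in y..x', αp t := hip_nonneg y hy x' hx' h2
        linarith [e1, e2, e3]
      · rw [A2, if_neg (not_le.2 h1), A2, if_neg (not_le.2 h2)]
        have e1 : (∫ t in x..y, (-αm t)) = (∫ t in x..x', (-αm t)) + ∫ t in x'..y, (-αm t) :=
          (intervalIntegral.integral_add_adjacent_intervals
            ((hsub_int αm him x hx x' hx').neg) ((hsub_int αm him x' hx' y hy).neg)).symm
        linarith [e1]
  -- neg integral identity
  have hnegint : ∀ x x' : ℝ, (∫ t in x..x', (-αm t)) = -∫ t in x..x', αm t := by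
    intro x x'; exact intervalIntegral.integral_neg
  constructor
  · -- forward
    rintro ⟨w, K, hwL, hwB, hwD⟩ x hx
    have hP := P_of_deriv hsf hip him hwL hwD
    apply le_csInf (hSne x hx)
    rintro z ⟨y, hy, rfl⟩
    rcases le_or_gt y x with h1 | h1
    · have h2 := (hP y hy x hx h1).2
      have h3 : A2 αp αm y x = ∫ t in y..x, αp t := by rw [A2, if_pos h1]
      have h4 := (hwB x hx).1
      have h5 := (hwB y hy).2
      rw [h3]; linarith
    · have h2 := (hP x hx y hy h1.le).1
      have h3 : A2 αp αm y x = -∫ t in x..y, αm t := by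
        rw [A2, if_neg (not_le.2 h1)]; exact hnegint x y
      have h4 := (hwB x hx).1
      have h5 := (hwB y hy).2
      rw [h3]; linarith
  · -- backward
    intro hfeas
    set w := Mbar sf αp αm μp with hww
    have hwS : ∀ x, w x = sInf {z : ℝ | ∃ y ∈ I, z = μp y + A2 αp αm y x} := fun _ => rfl
    -- P(w)
    have hP : ∀ x ∈ I, ∀ x' ∈ I, x ≤ x' →
        (∫ t in x..x', αm t) ≤ w x' - w x ∧ w x' - w x ≤ ∫ t in x..x', αp t := by
      intro x hx x' hx' hxx'
      have key1 : w x' ≤ w x + ∫ t in x..x', αp t := by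
        have h9 : w x' - (∫ t in x..x', αp t) ≤ w x := by
          rw [hwS x]
          apply le_csInf (hSne x hx)
          rintro z ⟨y, hy, rfl⟩
          have h7 : w x' ≤ μp y + A2 αp αm y x' := csInf_le (hSbdd x' hx') ⟨y, hy, rfl⟩
          have h8 := claim1 x hx x' hx' hxx' y hy
          linarith
        linarith
      have key2 : w x ≤ w x' + ∫ t in x..x', (-αm t) := by
        have h9 : w x - (∫ t in x..x', (-αm t)) ≤ w x' := by
          rw [hwS x']
          apply le_csInf (hSne x' hx')
          rintro z ⟨y, hy, rfl⟩
          have h7 : w x ≤ μp y + A2 αp αm y x := csInf_le (hSbdd x hx) ⟨y, hy, rfl⟩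
          have h8 := claim2 x hx x' hx' hxx' y hy
          linarith
        linarith
      rw [hnegint] at key2
      exact ⟨by linarith, by linarith⟩
    -- Lipschitz bound from P
    have hbnd : ∀ x ∈ I, ∀ y ∈ I, x ≤ y → |w y - w x| ≤ Ca * (y - x) := by
      intro x hx y hy hxy
      have h1 := hP x hx y hy hxy
      have h2 : |∫ t in x..y, αp t| ≤ Ca * |y - x| := by
        rw [← Real.norm_eq_abs]
        apply intervalIntegral.norm_integral_le_of_norm_le_const
        intro u hu
        rw [uIoc_of_le hxy] at hu
        rw [Real.norm_eq_abs]
        exact (hCa u ⟨le_trans hx.1 hu.1.le, le_trans hu.2 hy.2⟩).1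
      have h3 : |∫ t in x..y, αm t| ≤ Ca * |y - x| := by
        rw [← Real.norm_eq_abs]
        apply intervalIntegral.norm_integral_le_of_norm_le_const
        intro u hu
        rw [uIoc_of_le hxy] at hu
        rw [Real.norm_eq_abs]
        exact (hCa u ⟨le_trans hx.1 hu.1.le, le_trans hu.2 hy.2⟩).2
      rw [abs_of_nonneg (sub_nonneg.2 hxy)] at h2 h3
      rw [abs_le]
      have h2' := (abs_le.1 h2).1
      have h2'' := (abs_le.1 h2).2
      have h3' := (abs_le.1 h3).1
      constructor
      · linarith [h1.1]
      · linarith [h1.2]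
    have hLip : LipschitzOnWith Ca.toNNReal w I := by
      apply LipschitzOnWith.of_dist_le_mul
      intro x hx y hy
      rw [Real.dist_eq, Real.dist_eq, Real.coe_toNNReal Ca hCa0]
      rcases le_total x y with h | h
      · rw [abs_sub_comm, abs_sub_comm x y]
        have := hbnd x hx y hy h
        rwa [abs_of_nonneg (sub_nonneg.2 h)]
      · have := hbnd y hy x hx h
        rwa [abs_of_nonneg (sub_nonneg.2 h)]
    -- upper bound w ≤ μp
    have hwle : ∀ x ∈ I, w x ≤ μp x := by
      intro x hx
      have : w x ≤ μp x + A2 αp αm x x := csInf_le (hSbdd x hx) ⟨x, hx, rfl⟩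
      rwa [hA2_self, add_zero] at this
    exact ⟨w, Ca.toNNReal, hLip, fun s hs => ⟨hfeas s hs, hwle s hs⟩,
      deriv_of_P hsf hip him hLip hP⟩
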